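/- Let (G,σ) be a finite signed graph with an arbitrary vertex measure π : V → ℝ_{>0}. Then λ_∞^σ ≥ (√(1 + h_out^σ) − 1)². -/

import Mathlib

attribute [local instance] Classical.propDecidable

/-- The outer vertex boundary of a finite set `U`: vertices outside `U` with a neighbor in `U`. -/
noncomputable def outBd {V : Type*} [Fintype V] (Adj : V → V → Prop) (U : Finset V) : Finset V :=
  Finset.univ.filter fun y => y ∉ U ∧ ∃ x ∈ U, Adj x y

/-- The Poincaré-type constant `λ_∞^σ` of a signed graph with vertex measure `π`: the largest
`λ` with `λ ∑ f(x)² π(x) ≤ ∑ sup_{y∼x} |f(x) − σ_{xy} f(y)|² π(x)` for all `f`. -/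
noncomputable def lamInf {V : Type*} [Fintype V] (Adj : V → V → Prop) (σ : V → V → ℝ)
    (π : V → ℝ) : ℝ :=
  sSup {lam : ℝ | ∀ f : V → ℝ,
    lam * ∑ x : V, f x ^ 2 * π x ≤
      ∑ x : V, (⨆ y ∈ {y : V | Adj x y}, |f x - σ x y * f y| ^ 2) * π x}

/-- The `∞`-frustration index `ι_∞^{σ,π}(U)` of a subset `U` of a signed graph. -/
noncomputable def iotaInf {V : Type*} [Fintype V] (Adj : V → V → Prop) (σ : V → V → ℝ)
    (π : V → ℝ) (U : Finset V) : ℝ :=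
  sInf {r : ℝ | ∃ τ : V → ℝ, (∀ x : V, τ x = 1 ∨ τ x = -1) ∧
    r = (1 / 2) * ∑ x ∈ U,
      (⨆ y ∈ {y : V | y ∈ U ∧ Adj x y}, |τ x - σ x y * τ y|) * π x}

/-- The signed outer vertex isoperimetric constant `h_out^σ`. -/
noncomputable def hOutSigned {V : Type*} [Fintype V] (Adj : V → V → Prop) (σ : V → V → ℝ)
    (π : V → ℝ) : ℝ :=
  sInf {r : ℝ | ∃ U : Finset V, U.Nonempty ∧
    r = (2 * iotaInf Adj σ π U + ∑ y ∈ outBd Adj U, π y) / ∑ x ∈ U, π x}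

/-! ### Grid combinatorics -/

noncomputable def predT (T : Finset ℝ) (t : ℝ) : ℝ :=
  ((insert (0:ℝ) (T.filter (fun s => s < t))).max' (Finset.insert_nonempty _ _))

lemma predT_lt {T : Finset ℝ} {t : ℝ} (ht : 0 < t) : predT T t < t := by
  apply Finset.max'_lt_iff _ _ |>.mpr
  intro s hs
  rcases Finset.mem_insert.mp hs with rfl | hs
  · exact ht
  · exact (Finset.mem_filter.mp hs).2

lemma predT_erase {T : Finset ℝ} {m t : ℝ} (htm : t < m) :
    predT (T.erase m) t = predT T t := by
  unfold predT
  have h : (T.erase m).filter (fun s => s < t) = T.filter (fun s => s < t) := by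
    rw [Finset.filter_erase]
    apply Finset.erase_eq_of_notMem
    intro hm
    exact absurd (Finset.mem_filter.mp hm).2 (not_lt.mpr htm.le)
  simp_rw [h]

lemma lemA (T : Finset ℝ) : (∀ t ∈ T, (0:ℝ) < t) → ∀ a ∈ insert (0:ℝ) T,
    ∑ t ∈ T.filter (fun s => s ≤ a), (t - predT T t) = a := by
  induction T using Finset.strongInduction with
  | _ T IH =>
    intro hpos a ha
    rcases Finset.mem_insert.mp ha with rfl | haT
    · rw [Finset.filter_false_of_mem, Finset.sum_empty]
      intro t ht
      exact not_le.mpr (hpos t ht)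
    · have hTne : T.Nonempty := ⟨a, haT⟩
      have hfilterlt : T.filter (fun s => s < T.max' hTne) = T.erase (T.max' hTne) := by
        ext s
        simp only [Finset.mem_filter, Finset.mem_erase]
        constructor
        · rintro ⟨hs, hlt⟩; exact ⟨ne_of_lt hlt, hs⟩
        · rintro ⟨hne, hs⟩; exact ⟨hs, lt_of_le_of_ne (Finset.le_max' _ _ hs) hne⟩
      have herase_ss : T.erase (T.max' hTne) ⊂ T := Finset.erase_ssubset (T.max'_mem hTne)
      have hpos' : ∀ t ∈ T.erase (T.max' hTne), (0:ℝ) < t :=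
        fun t ht => hpos t (Finset.mem_of_mem_erase ht)
      by_cases ham : a = T.max' hTne
      · have hfilter : T.filter (fun s => s ≤ a) = T := by
          apply Finset.filter_true_of_mem
          intro t ht
          rw [ham]; exact Finset.le_max' _ _ ht
        rw [hfilter, ← Finset.add_sum_erase _ _ haT]
        have herase_eq : T.erase a = T.erase (T.max' hTne) := by rw [ham]
        have hpa : predT T a = (insert (0:ℝ) (T.erase (T.max' hTne))).max'
            (Finset.insert_nonempty _ _) := by
          unfold predT
          have h : T.filter (fun s => s < a) = T.erase (T.max' hTne) := by
            rw [ham, hfilterlt]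
          simp_rw [h]
        set p := (insert (0:ℝ) (T.erase (T.max' hTne))).max' (Finset.insert_nonempty _ _) with hpdef
        have hpmem : p ∈ insert (0:ℝ) (T.erase (T.max' hTne)) := Finset.max'_mem _ _
        have hple : ∀ t ∈ T.erase (T.max' hTne), t ≤ p := fun t ht =>
          Finset.le_max' _ _ (Finset.mem_insert_of_mem ht)
        have hsum2 : ∑ t ∈ T.erase a, (t - predT T t)
            = ∑ t ∈ (T.erase (T.max' hTne)).filter (fun s => s ≤ p),
                (t - predT (T.erase (T.max' hTne)) t) := by
          rw [herase_eq, Finset.filter_true_of_mem hple]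
          apply Finset.sum_congr rfl
          intro t ht
          rw [predT_erase (lt_of_le_of_ne (Finset.le_max' _ _ (Finset.mem_of_mem_erase ht))
            (Finset.ne_of_mem_erase ht))]
        rw [hsum2, IH _ herase_ss hpos' p hpmem, hpa]
        ring
      · have ham' : a < T.max' hTne := lt_of_le_of_ne (Finset.le_max' _ _ haT) ham
        have hfe : T.filter (fun s => s ≤ a) = (T.erase (T.max' hTne)).filter (fun s => s ≤ a) := by
          rw [Finset.filter_erase]
          apply (Finset.erase_eq_of_notMem _).symm
          intro hmm
          exact absurd ((Finset.mem_filter.mp hmm).2.trans_lt ham') (lt_irrefl _)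
        have hsc : ∑ t ∈ (T.erase (T.max' hTne)).filter (fun s => s ≤ a), (t - predT T t)
            = ∑ t ∈ (T.erase (T.max' hTne)).filter (fun s => s ≤ a),
                (t - predT (T.erase (T.max' hTne)) t) := by
          apply Finset.sum_congr rfl
          intro t ht
          rw [predT_erase]
          exact lt_of_le_of_ne
            (Finset.le_max' _ _ (Finset.mem_of_mem_erase (Finset.mem_filter.mp ht).1))
            (Finset.ne_of_mem_erase (Finset.mem_of_mem_filter _ ht))
        rw [hfe, hsc]
        exact IH _ herase_ss hpos' a
          (Finset.mem_insert_of_mem (Finset.mem_erase.mpr ⟨ham, haT⟩))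

lemma lemWindow (T : Finset ℝ) (hpos : ∀ t ∈ T, (0:ℝ) < t) {a b : ℝ}
    (ha : a ∈ insert (0:ℝ) T) (hb : b ∈ insert (0:ℝ) T) (hba : b ≤ a) :
    ∑ t ∈ T.filter (fun s => b < s ∧ s ≤ a), (t - predT T t) = a - b := by
  have h1 := lemA T hpos a ha
  have h2 := lemA T hpos b hb
  rw [← Finset.sum_filter_add_sum_filter_not (T.filter (fun s => s ≤ a)) (fun s => s ≤ b)] at h1
  have e1 : (T.filter (fun s => s ≤ a)).filter (fun s => s ≤ b) = T.filter (fun s => s ≤ b) := by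
    rw [Finset.filter_filter]
    apply Finset.filter_congr
    intro t _
    simp only [and_iff_right_iff_imp]
    exact fun h => h.trans hba
  have e2 : (T.filter (fun s => s ≤ a)).filter (fun s => ¬ s ≤ b)
      = T.filter (fun s => b < s ∧ s ≤ a) := by
    rw [Finset.filter_filter]
    apply Finset.filter_congr
    intro t _
    simp only [not_le, eq_iff_iff]
    tauto
  rw [e1, e2, h2] at h1
  linarith

/-! ### Arithmetic lemmas -/

lemma arith_frust {ε u b d : ℝ} (hε : 0 ≤ ε) (hε34 : ε ≤ 3/4) (hu : 0 ≤ u) (hb : 0 ≤ b)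
    (hd : u + b ≤ d) : 2 * ε * min (u^2) (b^2) ≤ (d - ε*u)^2 := by
  have key : ((1-ε)*u + b)^2 ≤ (d - ε*u)^2 := by
    have h1 : 0 ≤ (1-ε)*u + b := by nlinarith
    have h2 : (1-ε)*u + b ≤ d - ε*u := by nlinarith
    exact pow_le_pow_left₀ h1 h2 2
  have hq : 0 ≤ (3/4 - ε) * (21/4 - ε) := by
    apply mul_nonneg <;> linarith
  rcases le_total u b with h | h
  · rw [min_eq_left (by nlinarith)]
    have key2 : ((2-ε)*u)^2 ≤ ((1-ε)*u + b)^2 := by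
      apply pow_le_pow_left₀ (by nlinarith) (by nlinarith)
    nlinarith [mul_nonneg hq (sq_nonneg u)]
  · rw [min_eq_right (by nlinarith)]
    have key2 : ((2-ε)*b)^2 ≤ ((1-ε)*u + b)^2 := by
      apply pow_le_pow_left₀ (by nlinarith) (by nlinarith)
    nlinarith [mul_nonneg hq (sq_nonneg b)]

lemma arith_bd {u c d : ℝ} (hu : 0 ≤ u) (hc : 0 ≤ c) (hd : 0 ≤ d) (hcd : c ≤ u + d) :
    c^2 - u^2 ≤ 2*u*d + d^2 := by
  nlinarith [mul_le_mul hcd hcd hc (by linarith : (0:ℝ) ≤ u + d)]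

lemma arith_end {h ε : ℝ} (hh : 0 ≤ h) (hε : 0 ≤ ε) (hle : h ≤ 2*ε + ε^2) :
    (Real.sqrt (1+h) - 1)^2 ≤ ε^2 := by
  have h1 : Real.sqrt (1+h) ≤ 1 + ε := by
    have h0 : (1:ℝ) + h ≤ (1+ε)^2 := by nlinarith
    calc Real.sqrt (1+h) ≤ Real.sqrt ((1+ε)^2) := Real.sqrt_le_sqrt h0
    _ = 1 + ε := Real.sqrt_sq (by linarith)
  have h2 : Real.sqrt 1 ≤ Real.sqrt (1+h) := Real.sqrt_le_sqrt (by linarith)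
  rw [Real.sqrt_one] at h2
  exact pow_le_pow_left₀ (by linarith) (by linarith) 2

/-! ### Basic facts about `iotaInf` and `hOutSigned` -/

section Basic

variable {V : Type*} [Fintype V] (Adj : V → V → Prop) (σ : V → V → ℝ) (π : V → ℝ)

lemma iota_set_nonneg (hπ : ∀ x : V, 0 < π x) (U : Finset V) :
    ∀ r ∈ {r : ℝ | ∃ τ : V → ℝ, (∀ x : V, τ x = 1 ∨ τ x = -1) ∧
      r = (1 / 2) * ∑ x ∈ U,
        (⨆ y ∈ {y : V | y ∈ U ∧ Adj x y}, |τ x - σ x y * τ y|) * π x}, 0 ≤ r := by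
  rintro r ⟨τ, hτ, rfl⟩
  apply mul_nonneg (by norm_num)
  apply Finset.sum_nonneg
  intro x _
  apply mul_nonneg _ (hπ x).le
  apply Real.iSup_nonneg
  intro y
  apply Real.iSup_nonneg
  intro _
  exact abs_nonneg _

lemma iotaInf_nonneg (hπ : ∀ x : V, 0 < π x) (U : Finset V) : 0 ≤ iotaInf Adj σ π U :=
  Real.sInf_nonneg (iota_set_nonneg Adj σ π hπ U)

lemma iotaInf_le (hπ : ∀ x : V, 0 < π x) (U : Finset V) (τ : V → ℝ)
    (hτ : ∀ x : V, τ x = 1 ∨ τ x = -1) :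
    iotaInf Adj σ π U ≤ (1 / 2) * ∑ x ∈ U,
      (⨆ y ∈ {y : V | y ∈ U ∧ Adj x y}, |τ x - σ x y * τ y|) * π x := by
  exact csInf_le ⟨0, iota_set_nonneg Adj σ π hπ U⟩ ⟨τ, hτ, rfl⟩

lemma hOut_set_nonneg (hπ : ∀ x : V, 0 < π x) :
    ∀ r ∈ {r : ℝ | ∃ U : Finset V, U.Nonempty ∧
      r = (2 * iotaInf Adj σ π U + ∑ y ∈ outBd Adj U, π y) / ∑ x ∈ U, π x}, 0 ≤ r := by
  rintro r ⟨U, hU, rfl⟩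
  apply div_nonneg
  · have h1 := iotaInf_nonneg Adj σ π hπ U
    have h2 : 0 ≤ ∑ y ∈ outBd Adj U, π y := Finset.sum_nonneg fun y _ => (hπ y).le
    linarith
  · exact Finset.sum_nonneg fun x _ => (hπ x).le

lemma hOut_le (hπ : ∀ x : V, 0 < π x) (U : Finset V) (hU : U.Nonempty) :
    hOutSigned Adj σ π ≤ (2 * iotaInf Adj σ π U + ∑ y ∈ outBd Adj U, π y) / ∑ x ∈ U, π x := by
  exact csInf_le ⟨0, hOut_set_nonneg Adj σ π hπ⟩ ⟨U, hU, rfl⟩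

lemma hOut_nonneg (hπ : ∀ x : V, 0 < π x) : 0 ≤ hOutSigned Adj σ π :=
  Real.sInf_nonneg (hOut_set_nonneg Adj σ π hπ)

lemma hOut_le_two [Nonempty V] (hπ : ∀ x : V, 0 < π x)
    (hσsign : ∀ x y : V, Adj x y → σ x y = 1 ∨ σ x y = -1) :
    hOutSigned Adj σ π ≤ 2 := by
  have hbd : outBd Adj (Finset.univ : Finset V) = ∅ := by
    unfold outBd
    apply Finset.filter_false_of_mem
    intro y _ hy
    exact hy.1 (Finset.mem_univ y)
  have hiota : iotaInf Adj σ π Finset.univ ≤ ∑ x : V, π x := by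
    calc iotaInf Adj σ π Finset.univ
        ≤ (1 / 2) * ∑ x ∈ Finset.univ,
          (⨆ y ∈ {y : V | y ∈ Finset.univ ∧ Adj x y}, |(1:ℝ) - σ x y * 1|) * π x :=
          iotaInf_le Adj σ π hπ _ _ (fun _ => Or.inl rfl)
      _ ≤ (1 / 2) * ∑ x : V, 2 * π x := by
          apply mul_le_mul_of_nonneg_left _ (by norm_num)
          apply Finset.sum_le_sum
          intro x _
          apply mul_le_mul_of_nonneg_right _ (hπ x).le
          apply Real.iSup_le _ (by norm_num)
          intro y
          apply Real.iSup_le _ (by norm_num)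
          intro hy
          rcases hσsign x y hy.2 with h | h <;> rw [h] <;> norm_num
      _ = ∑ x : V, π x := by rw [← Finset.mul_sum]; ring
  have hsum : 0 < ∑ x : V, π x := Finset.sum_pos (fun x _ => hπ x) Finset.univ_nonempty
  calc hOutSigned Adj σ π
      ≤ (2 * iotaInf Adj σ π Finset.univ + ∑ y ∈ outBd Adj (Finset.univ : Finset V), π y)
        / ∑ x : V, π x := hOut_le Adj σ π hπ _ Finset.univ_nonempty
    _ ≤ 2 := by
        rw [hbd, Finset.sum_empty, add_zero, div_le_iff₀ hsum]
        linarith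

end Basic

section Central
variable {V : Type*} [Fintype V] [Nonempty V]

lemma swap_sum (T : Finset ℝ) (P : ℝ → V → Prop) [∀ t, DecidablePred (P t)]
    [∀ x : V, DecidablePred (fun t => P t x)] (c : V → ℝ) :
    ∑ t ∈ T, (t - predT T t) * ∑ x ∈ Finset.univ.filter (fun x => P t x), c x
      = ∑ x : V, (∑ t ∈ T.filter (fun t => P t x), (t - predT T t)) * c x := by
  calc ∑ t ∈ T, (t - predT T t) * ∑ x ∈ Finset.univ.filter (fun x => P t x), c x
      = ∑ t ∈ T, ∑ x ∈ (Finset.univ : Finset V),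
          (if P t x then (t - predT T t) * c x else 0) := by
        refine Finset.sum_congr rfl fun t _ => ?_
        rw [Finset.mul_sum, Finset.sum_filter]
    _ = ∑ x ∈ (Finset.univ : Finset V), ∑ t ∈ T,
          (if P t x then (t - predT T t) * c x else 0) := Finset.sum_comm
    _ = ∑ x : V, (∑ t ∈ T.filter (fun t => P t x), (t - predT T t)) * c x := by
        refine Finset.sum_congr rfl fun x _ => ?_
        rw [Finset.sum_filter, Finset.sum_mul]
        refine Finset.sum_congr rfl fun t _ => ?_
        split <;> simp

theorem hOut_le_eps (Adj : V → V → Prop) (σ : V → V → ℝ) (π : V → ℝ)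
    (hπ : ∀ x : V, 0 < π x)
    (hsymm : ∀ x y : V, Adj x y → Adj y x)
    (hσsymm : ∀ x y : V, σ x y = σ y x)
    (hσsign : ∀ x y : V, Adj x y → σ x y = 1 ∨ σ x y = -1)
    (f : V → ℝ) (hS : 0 < ∑ x : V, f x ^ 2 * π x)
    (heps34 : Real.sqrt (∑ x : V, (⨆ y ∈ {y : V | Adj x y}, |f x - σ x y * f y| ^ 2) * π x)
      / Real.sqrt (∑ x : V, f x ^ 2 * π x) ≤ 3/4) :
    hOutSigned Adj σ π ≤
      2 * (Real.sqrt (∑ x : V, (⨆ y ∈ {y : V | Adj x y}, |f x - σ x y * f y| ^ 2) * π x)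
        / Real.sqrt (∑ x : V, f x ^ 2 * π x))
      + (Real.sqrt (∑ x : V, (⨆ y ∈ {y : V | Adj x y}, |f x - σ x y * f y| ^ 2) * π x)
        / Real.sqrt (∑ x : V, f x ^ 2 * π x)) ^ 2 := by
  -- abbreviations
  set S : ℝ := ∑ x : V, f x ^ 2 * π x with hSdef
  set Q : ℝ := ∑ x : V, (⨆ y ∈ {y : V | Adj x y}, |f x - σ x y * f y| ^ 2) * π x with hQdef
  set eps : ℝ := Real.sqrt Q / Real.sqrt S with hepsdef
  set Dsq : V → ℝ := fun x => ⨆ y ∈ {y : V | Adj x y}, |f x - σ x y * f y| ^ 2 with hDsqdef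
  set D : V → ℝ := fun x => Real.sqrt (Dsq x) with hDdef
  set τ₀ : V → ℝ := fun x => if 0 ≤ f x then 1 else -1 with hτ₀def
  -- basic facts
  have hDsq0 : ∀ x, 0 ≤ Dsq x := by
    intro x
    apply Real.iSup_nonneg
    intro y
    apply Real.iSup_nonneg
    intro _
    positivity
  have hQsum : ∑ x : V, Dsq x * π x = Q := rfl
  have hQ0 : 0 ≤ Q := by
    rw [← hQsum]
    exact Finset.sum_nonneg fun x _ => mul_nonneg (hDsq0 x) (hπ x).le
  have hD0 : ∀ x, 0 ≤ D x := fun x => Real.sqrt_nonneg _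
  have hDsqD : ∀ x, D x ^ 2 = Dsq x := fun x => Real.sq_sqrt (hDsq0 x)
  have heps0 : 0 ≤ eps := div_nonneg (Real.sqrt_nonneg _) (Real.sqrt_nonneg _)
  have hepsQ : eps ^ 2 * S = Q := by
    rw [hepsdef, div_pow, Real.sq_sqrt hQ0, Real.sq_sqrt hS.le, div_mul_cancel₀ _ (ne_of_gt hS)]
  have hτ₀pm : ∀ x, τ₀ x = 1 ∨ τ₀ x = -1 := by
    intro x
    rw [hτ₀def]
    dsimp only
    split
    · exact Or.inl rfl
    · exact Or.inr rfl
  have hτ₀abs : ∀ x, |τ₀ x| = 1 := by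
    intro x
    rcases hτ₀pm x with h | h <;> rw [h] <;> norm_num
  have hτ₀f : ∀ x, τ₀ x * f x = |f x| := by
    intro x
    rw [hτ₀def]
    dsimp only
    split
    · rw [one_mul, abs_of_nonneg ‹_›]
    · rw [neg_one_mul, abs_of_neg (lt_of_not_ge ‹_›)]
  have hgrad : ∀ x y, Adj x y → |f x - σ x y * f y| ≤ D x := by
    intro x y hxy
    have h1 : |f x - σ x y * f y| ^ 2 ≤ Dsq x := by
      have hb : BddAbove (Set.range fun z => ⨆ _ : z ∈ {y : V | Adj x y}, |f x - σ x z * f z| ^ 2) :=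
        Set.Finite.bddAbove (Set.finite_range _)
      calc |f x - σ x y * f y| ^ 2
          = ⨆ _ : y ∈ {y : V | Adj x y}, |f x - σ x y * f y| ^ 2 :=
            (ciSup_pos (f := fun _ => |f x - σ x y * f y| ^ 2)
              (show y ∈ {y : V | Adj x y} from hxy)).symm
        _ ≤ Dsq x := le_ciSup hb y
    calc |f x - σ x y * f y| = Real.sqrt (|f x - σ x y * f y| ^ 2) :=
          (Real.sqrt_sq (abs_nonneg _)).symm
      _ ≤ D x := Real.sqrt_le_sqrt h1
  have hbad : ∀ x y, Adj x y → σ x y * τ₀ x * τ₀ y = -1 → |f x| + |f y| ≤ D x := by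
    intro x y hxy hb
    have h2 : σ x y * τ₀ x = - τ₀ y := by
      rcases hτ₀pm y with h | h <;> rw [h] at hb ⊢ <;> linarith
    have e1 : |f x| + |f y| = τ₀ x * (f x - σ x y * f y) := by
      rw [← hτ₀f x, ← hτ₀f y]
      linear_combination f y * h2
    calc |f x| + |f y| = τ₀ x * (f x - σ x y * f y) := e1
      _ ≤ |τ₀ x * (f x - σ x y * f y)| := le_abs_self _
      _ = |f x - σ x y * f y| := by rw [abs_mul, hτ₀abs, one_mul]
      _ ≤ D x := hgrad x y hxy
  have hnbr : ∀ x y, Adj x y → |f y| ≤ |f x| + D x := by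
    intro x y hxy
    have hσ1 : |σ x y| = 1 := by rcases hσsign x y hxy with h | h <;> rw [h] <;> norm_num
    have h3 := abs_add_le (f x) (σ x y * f y - f x)
    have h5 : f x + (σ x y * f y - f x) = σ x y * f y := by ring
    rw [h5, abs_sub_comm] at h3
    calc |f y| = |σ x y * f y| := by rw [abs_mul, hσ1, one_mul]
      _ ≤ |f x| + |f x - σ x y * f y| := h3
      _ ≤ |f x| + D x := by linarith [hgrad x y hxy]
  -- the grid
  set T : Finset ℝ := (Finset.univ.filter (fun x : V => f x ^ 2 ≠ 0)).image (fun x => f x ^ 2)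
    with hTdef
  have hTpos : ∀ t ∈ T, (0:ℝ) < t := by
    intro t ht
    rw [hTdef] at ht
    obtain ⟨x, hx, rfl⟩ := Finset.mem_image.mp ht
    exact (sq_nonneg (f x)).lt_of_ne (Ne.symm (Finset.mem_filter.mp hx).2)
  have hTne : T.Nonempty := by
    obtain ⟨x, _, hx⟩ := Finset.exists_ne_zero_of_sum_ne_zero (ne_of_gt hS)
    have hfx : f x ^ 2 ≠ 0 := fun h => hx (by rw [h, zero_mul])
    exact ⟨f x ^ 2, Finset.mem_image_of_mem _ (Finset.mem_filter.mpr ⟨Finset.mem_univ _, hfx⟩)⟩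
  have hmemT : ∀ x : V, f x ^ 2 ∈ insert (0:ℝ) T := by
    intro x
    by_cases h : f x ^ 2 = 0
    · rw [h]; exact Finset.mem_insert_self _ _
    · exact Finset.mem_insert_of_mem
        (Finset.mem_image_of_mem _ (Finset.mem_filter.mpr ⟨Finset.mem_univ _, h⟩))
  have hw0 : ∀ t ∈ T, (0:ℝ) < t - predT T t := fun t ht => sub_pos.mpr (predT_lt (hTpos t ht))
  set U : ℝ → Finset V := fun t => Finset.univ.filter (fun x => t ≤ f x ^ 2) with hUdef
  have hUne : ∀ t ∈ T, (U t).Nonempty := by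
    intro t ht
    rw [hTdef] at ht
    obtain ⟨x, _, rfl⟩ := Finset.mem_image.mp ht
    exact ⟨x, Finset.mem_filter.mpr ⟨Finset.mem_univ _, le_refl _⟩⟩
  -- the frustration and boundary predicates
  set P1 : ℝ → V → Prop := fun t x => t ≤ f x ^ 2 ∧
    ∃ y, Adj x y ∧ σ x y * τ₀ x * τ₀ y = -1 ∧ t ≤ f y ^ 2 with hP1def
  set P2 : ℝ → V → Prop := fun t y => y ∉ U t ∧ ∃ x ∈ U t, Adj x y with hP2def
  -- α and β
  set α : V → ℝ := fun x => ∑ t ∈ T.filter (fun t => P1 t x), (t - predT T t) with hαdef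
  set β : V → ℝ := fun y => ∑ t ∈ T.filter (fun t => P2 t y), (t - predT T t) with hβdef
  -- iota bound
  have hι : ∀ t ∈ T, iotaInf Adj σ π (U t) ≤ ∑ x ∈ Finset.univ.filter (fun x => P1 t x), π x := by
    intro t _
    refine (iotaInf_le Adj σ π hπ (U t) τ₀ hτ₀pm).trans ?_
    have h2 : ∑ x ∈ U t, (⨆ y ∈ {y : V | y ∈ U t ∧ Adj x y}, |τ₀ x - σ x y * τ₀ y|) * π x
        ≤ ∑ x ∈ U t, (if P1 t x then 2 * π x else 0) := by
      apply Finset.sum_le_sum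
      intro x hx
      by_cases hc : P1 t x
      · rw [if_pos hc]
        apply mul_le_mul_of_nonneg_right _ (hπ x).le
        apply Real.iSup_le _ (by norm_num)
        intro y
        apply Real.iSup_le _ (by norm_num)
        intro hy
        have hσ1 : |σ x y| = 1 := by rcases hσsign x y hy.2 with h | h <;> rw [h] <;> norm_num
        calc |τ₀ x - σ x y * τ₀ y| ≤ |τ₀ x| + |σ x y * τ₀ y| := abs_sub _ _
          _ = 2 := by rw [abs_mul, hσ1, hτ₀abs, hτ₀abs]; norm_num
      · rw [if_neg hc]
        have hxU : t ≤ f x ^ 2 := by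
          have := Finset.mem_filter.mp (show x ∈ Finset.univ.filter (fun x => t ≤ f x ^ 2) from hx)
          exact this.2
        have hzero : ∀ y, y ∈ U t ∧ Adj x y → |τ₀ x - σ x y * τ₀ y| = 0 := by
          rintro y ⟨hyU, hyadj⟩
          have hyg : t ≤ f y ^ 2 := (Finset.mem_filter.mp
            (show y ∈ Finset.univ.filter (fun x => t ≤ f x ^ 2) from hyU)).2
          have hne : σ x y * τ₀ x * τ₀ y ≠ -1 := by
            intro hbadsign
            exact hc ⟨hxU, y, hyadj, hbadsign, hyg⟩
          rcases hσsign x y hyadj with h | h <;> rcases hτ₀pm x with hx' | hx' <;>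
            rcases hτ₀pm y with hy' | hy' <;> rw [h, hx', hy'] at hne ⊢ <;> norm_num at hne <;> norm_num
        have hsup : (⨆ y ∈ {y : V | y ∈ U t ∧ Adj x y}, |τ₀ x - σ x y * τ₀ y|) ≤ 0 := by
          apply Real.iSup_le _ le_rfl
          intro y
          apply Real.iSup_le _ le_rfl
          intro hy
          exact le_of_eq (hzero y hy)
        calc (⨆ y ∈ {y : V | y ∈ U t ∧ Adj x y}, |τ₀ x - σ x y * τ₀ y|) * π x
            ≤ 0 * π x := mul_le_mul_of_nonneg_right hsup (hπ x).le
          _ = 0 := zero_mul _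
    have h3 : ∑ x ∈ U t, (if P1 t x then 2 * π x else 0)
        = ∑ x ∈ (U t).filter (fun x => P1 t x), 2 * π x := (Finset.sum_filter _ _).symm
    have h4 : (U t).filter (fun x => P1 t x) = Finset.univ.filter (fun x => P1 t x) := by
      rw [hUdef]
      dsimp only
      rw [Finset.filter_filter]
      apply Finset.filter_congr
      intro x _
      constructor
      · rintro ⟨_, h'⟩; exact h'
      · intro h'; exact ⟨h'.1, h'⟩
    rw [h3, h4] at h2
    calc (1 / 2) * ∑ x ∈ U t, (⨆ y ∈ {y : V | y ∈ U t ∧ Adj x y}, |τ₀ x - σ x y * τ₀ y|) * π x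
        ≤ (1 / 2) * ∑ x ∈ Finset.univ.filter (fun x => P1 t x), 2 * π x :=
          mul_le_mul_of_nonneg_left h2 (by norm_num)
      _ = ∑ x ∈ Finset.univ.filter (fun x => P1 t x), π x := by
          rw [Finset.mul_sum]
          exact Finset.sum_congr rfl fun x _ => by ring
  -- per-vertex bounds
  have hαkey : ∀ x, α x = 0 ∨ ∃ y, Adj x y ∧ σ x y * τ₀ x * τ₀ y = -1 ∧
      α x ≤ min (f x ^ 2) (f y ^ 2) := by
    intro x
    by_cases hbe : (Finset.univ.filter (fun y => Adj x y ∧ σ x y * τ₀ x * τ₀ y = -1)).Nonempty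
    · obtain ⟨ys, hysmem, hysmax⟩ := Finset.exists_max_image _ (fun y => f y ^ 2) hbe
      obtain ⟨-, hysadj, hyssign⟩ := Finset.mem_filter.mp hysmem
      refine Or.inr ⟨ys, hysadj, hyssign, ?_⟩
      have hsubset : T.filter (fun t => P1 t x)
          ⊆ T.filter (fun s => s ≤ min (f x ^ 2) (f ys ^ 2)) := by
        intro t htm
        obtain ⟨hT, hgx, y, hy1, hy2, hy3⟩ := Finset.mem_filter.mp htm
        refine Finset.mem_filter.mpr ⟨hT, le_min hgx (hy3.trans (hysmax y ?_))⟩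
        exact Finset.mem_filter.mpr ⟨Finset.mem_univ _, hy1, hy2⟩
      calc α x ≤ ∑ t ∈ T.filter (fun s => s ≤ min (f x ^ 2) (f ys ^ 2)), (t - predT T t) :=
            Finset.sum_le_sum_of_subset_of_nonneg hsubset
              (fun t ht _ => (hw0 t (Finset.mem_filter.mp ht).1).le)
        _ = min (f x ^ 2) (f ys ^ 2) := by
            apply lemA T hTpos
            rcases min_cases (f x ^ 2) (f ys ^ 2) with ⟨h, -⟩ | ⟨h, -⟩ <;> rw [h]
            · exact hmemT x
            · exact hmemT ys
    · left
      rw [hαdef]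
      dsimp only
      rw [Finset.filter_false_of_mem, Finset.sum_empty]
      intro t _ hP
      obtain ⟨-, y, hy1, hy2, -⟩ := hP
      exact hbe ⟨y, Finset.mem_filter.mpr ⟨Finset.mem_univ _, hy1, hy2⟩⟩
  have hβkey : ∀ y, β y ≤ 2 * |f y| * D y + Dsq y := by
    intro y
    have hRHS0 : 0 ≤ 2 * |f y| * D y + Dsq y :=
      add_nonneg (mul_nonneg (by positivity) (hD0 y)) (hDsq0 y)
    by_cases hne : (Finset.univ.filter (fun x => Adj x y)).Nonempty
    · obtain ⟨xs, hxsm, hxsmax⟩ := Finset.exists_max_image _ (fun x => f x ^ 2) hne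
      have hadj : Adj xs y := (Finset.mem_filter.mp hxsm).2
      have hsubset : T.filter (fun t => P2 t y)
          ⊆ T.filter (fun s => f y ^ 2 < s ∧ s ≤ f xs ^ 2) := by
        intro t htm
        obtain ⟨hT, hnotin, x, hxU, hxadj⟩ := Finset.mem_filter.mp htm
        have hyg : f y ^ 2 < t := by
          by_contra hyc
          exact hnotin (Finset.mem_filter.mpr ⟨Finset.mem_univ _, not_lt.mp hyc⟩)
        have hxg : t ≤ f x ^ 2 := (Finset.mem_filter.mp
          (show x ∈ Finset.univ.filter (fun z => t ≤ f z ^ 2) from hxU)).2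
        refine Finset.mem_filter.mpr ⟨hT, hyg, hxg.trans (hxsmax x ?_)⟩
        exact Finset.mem_filter.mpr ⟨Finset.mem_univ _, hxadj⟩
      have hβle : β y ≤ ∑ t ∈ T.filter (fun s => f y ^ 2 < s ∧ s ≤ f xs ^ 2), (t - predT T t) :=
        Finset.sum_le_sum_of_subset_of_nonneg hsubset
          (fun t ht _ => (hw0 t (Finset.mem_filter.mp ht).1).le)
      rcases le_or_gt (f xs ^ 2) (f y ^ 2) with hc | hc
      · have hemp : T.filter (fun s => f y ^ 2 < s ∧ s ≤ f xs ^ 2) = ∅ := by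
          apply Finset.filter_false_of_mem
          rintro t _ ⟨h1, h2⟩
          exact absurd (h2.trans hc) (not_le.mpr h1)
        rw [hemp, Finset.sum_empty] at hβle
        exact hβle.trans hRHS0
      · have hwin := lemWindow T hTpos (hmemT xs) (hmemT y) hc.le
        rw [hwin] at hβle
        refine hβle.trans ?_
        have hcd : |f xs| ≤ |f y| + D y := hnbr y xs (hsymm xs y hadj)
        have := arith_bd (abs_nonneg (f y)) (abs_nonneg (f xs)) (hD0 y) hcd
        rw [sq_abs, sq_abs] at this
        calc f xs ^ 2 - f y ^ 2 ≤ 2 * |f y| * D y + D y ^ 2 := this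
          _ = 2 * |f y| * D y + Dsq y := by rw [hDsqD]
    · have hemp : T.filter (fun t => P2 t y) = ∅ := by
        apply Finset.filter_false_of_mem
        rintro t _ ⟨-, x, -, hxadj⟩
        exact hne ⟨x, Finset.mem_filter.mpr ⟨Finset.mem_univ _, hxadj⟩⟩
      rw [hβdef]
      dsimp only
      rw [hemp, Finset.sum_empty]
      exact hRHS0
  have hα0 : ∀ x, 0 ≤ α x :=
    fun x => Finset.sum_nonneg fun t ht => (hw0 t (Finset.mem_filter.mp ht).1).le
  have hβ0 : ∀ y, 0 ≤ β y :=
    fun y => Finset.sum_nonneg fun t ht => (hw0 t (Finset.mem_filter.mp ht).1).le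
  -- main contradiction
  by_contra hcon
  push_neg at hcon
  have key : ∀ t ∈ T, (2*eps + eps^2) * ∑ x ∈ U t, π x
      < 2 * (∑ x ∈ Finset.univ.filter (fun x => P1 t x), π x) + ∑ y ∈ outBd Adj (U t), π y := by
    intro t ht
    by_contra hk
    push_neg at hk
    have hι' := hι t ht
    have hcost : 2 * iotaInf Adj σ π (U t) + ∑ y ∈ outBd Adj (U t), π y
        ≤ (2*eps + eps^2) * ∑ x ∈ U t, π x := by linarith
    have hUpos : 0 < ∑ x ∈ U t, π x := Finset.sum_pos (fun x _ => hπ x) (hUne t ht)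
    have h6 := hOut_le Adj σ π hπ (U t) (hUne t ht)
    have h7 : hOutSigned Adj σ π ≤ 2*eps + eps^2 :=
      h6.trans ((div_le_iff₀ hUpos).mpr hcost)
    exact absurd h7 (not_le.mpr hcon)
  have hout : ∀ t ∈ T, outBd Adj (U t) = Finset.univ.filter (fun y => P2 t y) := by
    intro t _
    rfl
  have claim1 : ∑ t ∈ T, (t - predT T t) * ∑ x ∈ U t, π x = S := by
    have hUt : ∀ t : ℝ, U t = Finset.univ.filter (fun x => t ≤ f x ^ 2) := fun t => rfl
    simp_rw [hUt]
    rw [swap_sum T (fun t x => t ≤ f x ^ 2) π, hSdef]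
    apply Finset.sum_congr rfl
    intro x _
    congr 1
    exact lemA T hTpos _ (hmemT x)
  have claim2 : ∑ t ∈ T, (t - predT T t) * ∑ x ∈ Finset.univ.filter (fun x => P1 t x), π x
      = ∑ x : V, α x * π x := by
    exact swap_sum T (fun t x => P1 t x) π
  have claim3 : ∑ t ∈ T, (t - predT T t) * ∑ y ∈ Finset.univ.filter (fun y => P2 t y), π y
      = ∑ y : V, β y * π y := by
    exact swap_sum T (fun t y => P2 t y) π
  have Hsum : (2*eps + eps^2) * S < 2 * (∑ x : V, α x * π x) + ∑ y : V, β y * π y := by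
    have key' : ∀ t ∈ T, (2*eps + eps^2) * ∑ x ∈ U t, π x
        < 2 * (∑ x ∈ Finset.univ.filter (fun x => P1 t x), π x)
          + ∑ y ∈ Finset.univ.filter (fun y => P2 t y), π y := by
      intro t ht
      have hk := key t ht
      rwa [hout t ht] at hk
    have hstrict : ∑ t ∈ T, (t - predT T t) * ((2*eps + eps^2) * ∑ x ∈ U t, π x)
        < ∑ t ∈ T, (t - predT T t) *
          (2 * (∑ x ∈ Finset.univ.filter (fun x => P1 t x), π x)
            + ∑ y ∈ Finset.univ.filter (fun y => P2 t y), π y) :=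
      Finset.sum_lt_sum_of_nonempty hTne
        (fun t ht => mul_lt_mul_of_pos_left (key' t ht) (hw0 t ht))
    have hLeq : (2*eps+eps^2) * S
        = ∑ t ∈ T, (t - predT T t) * ((2*eps+eps^2) * ∑ x ∈ U t, π x) := by
      rw [← claim1, Finset.mul_sum]
      exact Finset.sum_congr rfl fun t _ => by ring
    have hsplit : ∑ t ∈ T, (t - predT T t) *
        (2 * (∑ x ∈ Finset.univ.filter (fun x => P1 t x), π x)
          + ∑ y ∈ Finset.univ.filter (fun y => P2 t y), π y)
        = 2 * (∑ x : V, α x * π x) + ∑ y : V, β y * π y := by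
      rw [← claim2, ← claim3, Finset.mul_sum, ← Finset.sum_add_distrib]
      exact Finset.sum_congr rfl fun t _ => by ring
    rw [hLeq, ← hsplit]
    exact hstrict
  have Hbound : 2 * (∑ x : V, α x * π x) + ∑ y : V, β y * π y ≤ (2*eps + eps^2) * S := by
    rcases eq_or_lt_of_le heps0 with heq | hpos
    · -- eps = 0
      have hQzero : Q = 0 := by rw [← hepsQ, ← heq]; ring
      have hDsqzero : ∀ x, Dsq x = 0 := by
        intro x
        have h1 : ∀ x ∈ (Finset.univ : Finset V), 0 ≤ Dsq x * π x :=
          fun x _ => mul_nonneg (hDsq0 x) (hπ x).le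
        have h2 := (Finset.sum_eq_zero_iff_of_nonneg h1).mp (by rw [hQsum, hQzero]) x
          (Finset.mem_univ x)
        exact (mul_eq_zero.mp h2).resolve_right (ne_of_gt (hπ x))
      have hDzero : ∀ x, D x = 0 := by
        intro x
        rw [hDdef]
        dsimp only
        rw [hDsqzero, Real.sqrt_zero]
      have hαz : ∀ x, α x ≤ 0 := by
        intro x
        rcases hαkey x with h | ⟨y, hadj, hsign, hle⟩
        · exact h.le
        · have h2 := hbad x y hadj hsign
          rw [hDzero] at h2
          have h3 : |f y| = 0 := le_antisymm (by linarith [abs_nonneg (f x)]) (abs_nonneg _)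
          have h4 : f y ^ 2 = 0 := by rw [← sq_abs, h3]; ring
          calc α x ≤ min (f x ^ 2) (f y ^ 2) := hle
            _ ≤ f y ^ 2 := min_le_right _ _
            _ = 0 := h4
      have hβz : ∀ y, β y ≤ 0 := by
        intro y
        refine (hβkey y).trans ?_
        rw [hDzero, hDsqzero]
        norm_num
      have hs1 : ∑ x : V, α x * π x ≤ 0 :=
        Finset.sum_nonpos fun x _ => mul_nonpos_of_nonpos_of_nonneg (hαz x) (hπ x).le
      have hs2 : ∑ y : V, β y * π y ≤ 0 :=
        Finset.sum_nonpos fun y _ => mul_nonpos_of_nonpos_of_nonneg (hβz y) (hπ y).le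
      have : (2*eps + eps^2) * S = 0 := by rw [← heq]; ring
      linarith
    · -- eps > 0
      have hptw : ∀ x, 2*eps*α x + eps * β x
          ≤ (D x - eps * |f x|)^2 + eps*(2 * |f x| * D x + Dsq x) := by
        intro x
        have h1 : 2*eps*α x ≤ (D x - eps * |f x|)^2 := by
          rcases hαkey x with h | ⟨y, hadj, hsign, hle⟩
          · rw [h, mul_zero]
            exact sq_nonneg _
          · calc 2*eps*α x ≤ 2*eps*min (f x ^ 2) (f y ^ 2) := by
                  apply mul_le_mul_of_nonneg_left hle (by positivity)
              _ = 2*eps*min (|f x| ^ 2) (|f y| ^ 2) := by rw [sq_abs, sq_abs]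
              _ ≤ (D x - eps * |f x|)^2 :=
                  arith_frust heps0 heps34 (abs_nonneg _) (abs_nonneg _) (hbad x y hadj hsign)
        have h2 : eps * β x ≤ eps*(2 * |f x| * D x + Dsq x) :=
          mul_le_mul_of_nonneg_left (hβkey x) heps0
        linarith
      have hsum2 : ∑ x : V, (2*eps*α x + eps*β x) * π x
          ≤ ∑ x : V, ((D x - eps * |f x|)^2 + eps*(2 * |f x| * D x + Dsq x)) * π x :=
        Finset.sum_le_sum fun x _ => mul_le_mul_of_nonneg_right (hptw x) (hπ x).le
      have hring : ∀ x : V, ((D x - eps * |f x|)^2 + eps*(2 * |f x| * D x + Dsq x)) * π x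
          = Dsq x * π x + eps^2 * (f x ^ 2 * π x) + eps * (Dsq x * π x) := by
        intro x
        have hd := hDsqD x
        have ha : |f x| ^ 2 = f x ^ 2 := sq_abs (f x)
        linear_combination (π x) * hd + eps^2 * (π x) * ha
      have hRHS : ∑ x : V, ((D x - eps * |f x|)^2 + eps*(2 * |f x| * D x + Dsq x)) * π x
          = Q + eps^2 * S + eps * Q := by
        simp_rw [hring]
        rw [Finset.sum_add_distrib, Finset.sum_add_distrib, ← Finset.mul_sum, ← Finset.mul_sum,
          hQsum, ← hSdef]
      have hLHS : ∑ x : V, (2*eps*α x + eps*β x) * π x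
          = eps * (2 * (∑ x : V, α x * π x) + ∑ y : V, β y * π y) := by
        have e1 : ∀ x : V, (2*eps*α x + eps*β x) * π x
            = eps * (2*(α x * π x)) + eps * (β x * π x) := fun x => by ring
        simp_rw [e1]
        rw [Finset.sum_add_distrib, ← Finset.mul_sum, ← Finset.mul_sum, ← Finset.mul_sum]
        ring
      have hfinal : eps * (2 * (∑ x : V, α x * π x) + ∑ y : V, β y * π y)
          ≤ eps * ((2*eps + eps^2) * S) := by
        rw [← hLHS]
        refine hsum2.trans ?_
        rw [hRHS]
        nlinarith [hepsQ]
      exact le_of_mul_le_mul_left hfinal hpos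
  exact absurd (Hsum.trans_le Hbound) (lt_irrefl _)

end Central

/-- For a finite signed graph with an arbitrary positive vertex measure `π`,
`λ_∞^σ ≥ (√(1 + h_out^σ) − 1)²`. -/
theorem lamInf_ge_of_hOutSigned {V : Type*} [Fintype V] (Adj : V → V → Prop)
    (σ : V → V → ℝ) (π : V → ℝ)
    (hπ : ∀ x : V, 0 < π x)
    (hsymm : ∀ x y : V, Adj x y → Adj y x)
    (hσsymm : ∀ x y : V, σ x y = σ y x)
    (hσsign : ∀ x y : V, Adj x y → σ x y = 1 ∨ σ x y = -1) :
    lamInf Adj σ π ≥ (Real.sqrt (1 + hOutSigned Adj σ π) - 1) ^ 2 := by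
  rcases isEmpty_or_nonempty V with hV | hV
  · have h1 : hOutSigned Adj σ π = 0 := by
      unfold hOutSigned
      convert Real.sInf_empty
      rw [Set.eq_empty_iff_forall_notMem]
      rintro r ⟨U, hU, -⟩
      obtain ⟨x, -⟩ := hU
      exact hV.false x
    have h2 : lamInf Adj σ π = 0 := by
      unfold lamInf
      have hset : {lam : ℝ | ∀ f : V → ℝ,
          lam * ∑ x : V, f x ^ 2 * π x ≤
            ∑ x : V, (⨆ y ∈ {y : V | Adj x y}, |f x - σ x y * f y| ^ 2) * π x}
          = Set.univ := by
        ext lam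
        simp only [Set.mem_setOf_eq, Set.mem_univ, iff_true]
        intro f
        rw [Finset.univ_eq_empty, Finset.sum_empty, Finset.sum_empty, mul_zero]
      rw [hset]
      exact Real.sSup_univ
    rw [h1, h2, add_zero, Real.sqrt_one]
    norm_num
  · apply le_csSup
    · refine ⟨(∑ x : V, (⨆ y ∈ {y : V | Adj x y},
        |(fun _ : V => (1:ℝ)) x - σ x y * (fun _ : V => (1:ℝ)) y| ^ 2) * π x) / ∑ x : V, π x, ?_⟩
      rintro lam hlam
      have h := hlam (fun _ => 1)
      have hπpos : 0 < ∑ x : V, π x := Finset.sum_pos (fun x _ => hπ x) Finset.univ_nonempty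
      rw [le_div_iff₀ hπpos]
      calc lam * ∑ x : V, π x
          = lam * ∑ x : V, (fun _ : V => (1:ℝ)) x ^ 2 * π x := by
            congr 1
            exact Finset.sum_congr rfl fun x _ => by norm_num
        _ ≤ _ := h
    · show ∀ f : V → ℝ, _ * ∑ x : V, f x ^ 2 * π x ≤
        ∑ x : V, (⨆ y ∈ {y : V | Adj x y}, |f x - σ x y * f y| ^ 2) * π x
      intro f
      have hh0 : 0 ≤ hOutSigned Adj σ π := hOut_nonneg Adj σ π hπ
      have hQ0 : 0 ≤ ∑ x : V, (⨆ y ∈ {y : V | Adj x y}, |f x - σ x y * f y| ^ 2) * π x := by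
        apply Finset.sum_nonneg
        intro x _
        apply mul_nonneg _ (hπ x).le
        apply Real.iSup_nonneg
        intro y
        apply Real.iSup_nonneg
        intro _
        positivity
      rcases le_or_gt (∑ x : V, f x ^ 2 * π x) 0 with hS0 | hSpos
      · have hSz : ∑ x : V, f x ^ 2 * π x = 0 :=
          le_antisymm hS0 (Finset.sum_nonneg fun x _ => mul_nonneg (sq_nonneg _) (hπ x).le)
        rw [hSz, mul_zero]
        exact hQ0
      · set S : ℝ := ∑ x : V, f x ^ 2 * π x with hSdef
        set Q : ℝ := ∑ x : V, (⨆ y ∈ {y : V | Adj x y}, |f x - σ x y * f y| ^ 2) * π x with hQdef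
        set eps : ℝ := Real.sqrt Q / Real.sqrt S with hepsdef
        have heps0 : 0 ≤ eps := div_nonneg (Real.sqrt_nonneg _) (Real.sqrt_nonneg _)
        have hkey : hOutSigned Adj σ π ≤ 2*eps + eps^2 := by
          by_cases hc : eps ≤ 3/4
          · exact hOut_le_eps Adj σ π hπ hsymm hσsymm hσsign f hSpos hc
          · refine (hOut_le_two Adj σ π hπ hσsign).trans ?_
            push_neg at hc
            nlinarith [hc]
        have hmain := arith_end hh0 heps0 hkey
        have hepsQ : eps ^ 2 * S = Q := by
          rw [hepsdef, div_pow, Real.sq_sqrt hQ0, Real.sq_sqrt hSpos.le,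
            div_mul_cancel₀ _ (ne_of_gt hSpos)]
        calc (Real.sqrt (1 + hOutSigned Adj σ π) - 1) ^ 2 * S
            ≤ eps ^ 2 * S := mul_le_mul_of_nonneg_right hmain hSpos.le
          _ = Q := hepsQ
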